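/- arXiv:1410.6097 — 3 statements merged into one kernel-verified Lean document; each statement's English description precedes it below -/
import Mathlib

section
/- Let Q' = {q_1, ..., q_m} be a finite set with m ≥ 2 elements, viewed as generators of a free group. Define commutator words inductively: C_1 consists of words [q_i^{e_i}, q_j^{e_j}] = q_i^{e_i} q_j^{e_j} q_i^{-e_i} q_j^{-e_j} for i ≠ j and nonzero integers e_i, e_j; and C_i consists of words [q_i^{e_i}, v^e] where v ∈ C_{i-1} does not contain q_i as an occurrence and e_i, e are nonzero integers. Then every word w in C_{m-1} satisfies: for every q ∈ Q', the word obtained from w by deleting all occurrences of q and q^{-1} reduces to the identity in the free group on Q'. -/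
variable {Q : Type} [DecidableEq Q]

/-- The word `q^e` over the doubled alphabet `Q ∪ Q⁻¹`
(letters `(q, true)` positive, `(q, false)` formal inverses). -/
def wpow (q : Q) (e : ℤ) : List (Q × Bool) :=
  if 0 ≤ e then List.replicate e.toNat (q, true) else List.replicate (-e).toNat (q, false)

/-- Formal inverse of a word over `Q ∪ Q⁻¹`. -/
def winv (w : List (Q × Bool)) : List (Q × Bool) :=
  (w.map fun p => (p.1, !p.2)).reverse

/-- The word `w^e` for an integer exponent `e`. -/
def wIntPow (w : List (Q × Bool)) (e : ℤ) : List (Q × Bool) :=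
  if 0 ≤ e then (List.replicate e.toNat w).flatten
  else (List.replicate (-e).toNat (winv w)).flatten

/-- `q` occurs in `w` (as `q` or `q⁻¹`). -/
def occurs (q : Q) (w : List (Q × Bool)) : Prop := ∃ b : Bool, (q, b) ∈ w

/-- The inductively defined sets `C_k` of commutator words:
`C_1` consists of the words `[q_i^{e_i}, q_j^{e_j}]` for `i ≠ j` and nonzero
integer exponents, and `C_{k+1}` consists of the words `[q^{e'}, v^e]` where
`v ∈ C_k`, `q` does not occur in `v`, and `e', e` are nonzero. -/
inductive CommWord : ℕ → List (Q × Bool) → Prop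
  | base (i j : Q) (ei ej : ℤ) (hij : i ≠ j) (hei : ei ≠ 0) (hej : ej ≠ 0) :
      CommWord 1 (wpow i ei ++ wpow j ej ++ winv (wpow i ei) ++ winv (wpow j ej))
  | step (k : ℕ) (q : Q) (e' e : ℤ) (v : List (Q × Bool)) (hv : CommWord k v)
      (hq : ¬ occurs q v) (he' : e' ≠ 0) (he : e ≠ 0) :
      CommWord (k + 1) (wpow q e' ++ wIntPow v e ++ winv (wpow q e') ++ winv (wIntPow v e))

/-- The erasing morphism `ε_q`: delete all occurrences of `q` and `q⁻¹`. -/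
def eraseGen (q : Q) (w : List (Q × Bool)) : List (Q × Bool) :=
  w.filter fun p => decide (p.1 ≠ q)

-- aux lemmas

lemma winv_eq_invRev (w : List (Q × Bool)) : winv w = FreeGroup.invRev w := rfl

lemma mk_winv (w : List (Q × Bool)) : FreeGroup.mk (winv w) = (FreeGroup.mk w)⁻¹ := by
  rw [winv_eq_invRev, ← FreeGroup.inv_mk]

lemma eraseGen_append (q : Q) (a b : List (Q × Bool)) :
    eraseGen q (a ++ b) = eraseGen q a ++ eraseGen q b := List.filter_append ..

lemma eraseGen_winv (q : Q) (w : List (Q × Bool)) :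
    eraseGen q (winv w) = winv (eraseGen q w) := by
  induction w with
  | nil => rfl
  | cons p t ih =>
    by_cases h : p.1 = q <;>
      simp [winv, eraseGen, List.filter_append, h] at * <;> simp [ih]

lemma eraseGen_flatten (q : Q) (l : List (List (Q × Bool))) :
    eraseGen q l.flatten = (l.map (eraseGen q)).flatten := by
  induction l with
  | nil => rfl
  | cons a t ih => simp [eraseGen, List.filter_append] at *; simp [ih]

lemma eraseGen_wIntPow (q : Q) (v : List (Q × Bool)) (e : ℤ) :
    eraseGen q (wIntPow v e) = wIntPow (eraseGen q v) e := by
  unfold wIntPow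
  split <;> rw [eraseGen_flatten, List.map_replicate] <;> rw [eraseGen_winv]

lemma eraseGen_wpow_self (q : Q) (e : ℤ) : eraseGen q (wpow q e) = [] := by
  unfold wpow eraseGen
  split <;> simp

lemma mk_flatten_replicate_one {u : List (Q × Bool)} (h : FreeGroup.mk u = 1) (n : ℕ) :
    FreeGroup.mk (List.replicate n u).flatten = 1 := by
  induction n with
  | zero => rfl
  | succ n ih => rw [List.replicate_succ, List.flatten_cons, ← FreeGroup.mul_mk, h, ih, one_mul]

lemma mk_wIntPow_one {u : List (Q × Bool)} (h : FreeGroup.mk u = 1) (e : ℤ) :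
    FreeGroup.mk (wIntPow u e) = 1 := by
  unfold wIntPow
  split
  · exact mk_flatten_replicate_one h _
  · exact mk_flatten_replicate_one (by rw [mk_winv, h, inv_one]) _

lemma mk_commutator (A B : List (Q × Bool)) :
    FreeGroup.mk (A ++ B ++ winv A ++ winv B)
      = FreeGroup.mk A * FreeGroup.mk B * (FreeGroup.mk A)⁻¹ * (FreeGroup.mk B)⁻¹ := by
  simp only [← FreeGroup.mul_mk, mk_winv]

-- content

def cont (w : List (Q × Bool)) : Finset Q := (w.map Prod.fst).toFinset

lemma occurs_iff {q : Q} {w : List (Q × Bool)} : occurs q w ↔ q ∈ cont w := by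
  simp only [occurs, cont, List.mem_toFinset, List.mem_map]
  constructor
  · rintro ⟨b, hb⟩; exact ⟨(q, b), hb, rfl⟩
  · rintro ⟨⟨a, b⟩, hab, rfl⟩; exact ⟨b, hab⟩

lemma cont_append (a b : List (Q × Bool)) : cont (a ++ b) = cont a ∪ cont b := by
  simp [cont]

lemma toFinset_replicate_succ (x : Q) (n : ℕ) :
    (List.replicate (n + 1) x).toFinset = {x} := by
  induction n with
  | zero => simp
  | succ n ih => rw [List.replicate_succ, List.toFinset_cons, ih]; simp

lemma cont_winv (w : List (Q × Bool)) : cont (winv w) = cont w := by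
  simp only [cont, winv, List.map_reverse, List.toFinset_reverse, List.map_map]
  congr 1

lemma cont_wpow {p : Q} {e : ℤ} (he : e ≠ 0) : cont (wpow p e) = {p} := by
  unfold wpow cont
  split
  · have : e.toNat ≠ 0 := by omega
    obtain ⟨n, hn⟩ := Nat.exists_eq_succ_of_ne_zero this
    rw [List.map_replicate, hn, toFinset_replicate_succ]
  · have : (-e).toNat ≠ 0 := by omega
    obtain ⟨n, hn⟩ := Nat.exists_eq_succ_of_ne_zero this
    rw [List.map_replicate, hn, toFinset_replicate_succ]

lemma cont_flatten_replicate (v : List (Q × Bool)) {n : ℕ} (hn : n ≠ 0) :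
    cont (List.replicate n v).flatten = cont v := by
  induction n with
  | zero => exact absurd rfl hn
  | succ n ih =>
    rw [List.replicate_succ, List.flatten_cons, cont_append]
    cases n with
    | zero => simp [cont]
    | succ m => rw [ih (by omega), Finset.union_self]

lemma cont_wIntPow (v : List (Q × Bool)) {e : ℤ} (he : e ≠ 0) :
    cont (wIntPow v e) = cont v := by
  unfold wIntPow
  split
  · exact (cont_flatten_replicate v (by omega)).trans rfl
  · rw [cont_flatten_replicate (winv v) (by omega), cont_winv]

lemma commWord_cont_card {k : ℕ} {w : List (Q × Bool)} (hw : CommWord k w) :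
    (cont w).card = k + 1 := by
  induction hw with
  | base i j ei ej hij hei hej =>
    rw [cont_append, cont_append, cont_append, cont_winv, cont_winv,
      cont_wpow hei, cont_wpow hej]
    have : ({i} ∪ {j} ∪ {i} ∪ {j} : Finset Q) = {i, j} := by
      ext x; simp
    rw [this, Finset.card_pair hij]
  | step k p e' e v hv hq he' he ih =>
    rw [cont_append, cont_append, cont_append, cont_winv, cont_winv,
      cont_wpow he', cont_wIntPow v he]
    have hp : p ∉ cont v := fun h => hq (occurs_iff.mpr h)
    have : ({p} ∪ cont v ∪ {p} ∪ cont v : Finset Q) = insert p (cont v) := by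
      ext x; simp
    rw [this, Finset.card_insert_of_notMem hp, ih]

lemma commWord_fragile {k : ℕ} {w : List (Q × Bool)} (hw : CommWord k w)
    (q : Q) (hocc : occurs q w) : FreeGroup.mk (eraseGen q w) = 1 := by
  induction hw with
  | base i j ei ej hij hei hej =>
    rw [occurs_iff, cont_append, cont_append, cont_append, cont_winv, cont_winv,
      cont_wpow hei, cont_wpow hej] at hocc
    simp only [Finset.mem_union, Finset.mem_singleton] at hocc
    rw [eraseGen_append, eraseGen_append, eraseGen_append, eraseGen_winv, eraseGen_winv,
      mk_commutator]
    rcases (by tauto : q = i ∨ q = j) with rfl | rfl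
    · rw [eraseGen_wpow_self, ← FreeGroup.one_eq_mk]; group
    · rw [eraseGen_wpow_self, ← FreeGroup.one_eq_mk]; group
  | step k p e' e v hv hq he' he ih =>
    rw [occurs_iff, cont_append, cont_append, cont_append, cont_winv, cont_winv,
      cont_wpow he', cont_wIntPow v he] at hocc
    simp only [Finset.mem_union, Finset.mem_singleton] at hocc
    rw [eraseGen_append, eraseGen_append, eraseGen_append, eraseGen_winv, eraseGen_winv,
      mk_commutator]
    rcases (by tauto : q = p ∨ q ∈ cont v) with rfl | h
    · rw [eraseGen_wpow_self, ← FreeGroup.one_eq_mk]; group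
    · have h1 : FreeGroup.mk (eraseGen q (wIntPow v e)) = 1 := by
        rw [eraseGen_wIntPow]
        exact mk_wIntPow_one (ih (occurs_iff.mpr h)) e
      rw [h1]; group

/-- Every commutator word in `C_{m-1}` on a set of `m ≥ 2` generators is strongly
fragile: erasing any generator yields a word that reduces to the identity of the
free group. -/
theorem commWord_strongly_fragile [Fintype Q] (hm : 2 ≤ Fintype.card Q)
    (w : List (Q × Bool)) (hw : CommWord (Fintype.card Q - 1) w) (q : Q) :
    FreeGroup.mk (eraseGen q w) = 1 := by
  have hcard := commWord_cont_card hw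
  have : (cont w).card = Fintype.card Q := by omega
  have huniv : cont w = Finset.univ := Finset.eq_univ_of_card _ this
  exact commWord_fragile hw q (occurs_iff.mpr (huniv ▸ Finset.mem_univ q))
end

section
/- An element u of (Q ∪ Q^{-1})^ω is essentially trivial if and only if there is an integer m such that for every finite factor w of u, the reduced form of w has length at most m. -/
variable {Q : Type} [DecidableEq Q] [Fintype Q]

/-- The length-`n` prefix of a right-infinite word. -/
def pre (u : ℕ → Q × Bool) (n : ℕ) : List (Q × Bool) := List.ofFn fun i : Fin n => u i

/-- The factor `u[i..i+l-1]` of the infinite word `u`. -/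
def factor (u : ℕ → Q × Bool) (i l : ℕ) : List (Q × Bool) :=
  List.ofFn fun k : Fin l => u (i + k)

/-- The free reduction of a word over `Q ∪ Q⁻¹`. -/
def red (w : List (Q × Bool)) : List (Q × Bool) := FreeGroup.reduce w

/-- `u` is essentially trivial: the reduced forms of its prefixes have uniformly
bounded length. -/
def EssentiallyTrivial (u : ℕ → Q × Bool) : Prop :=
  ∃ m : ℕ, ∀ n, (red (pre u n)).length ≤ m

lemma pre_append (u : ℕ → Q × Bool) (i l : ℕ) :
    pre u (i + l) = pre u i ++ factor u i l := by
  simp [pre, factor, List.ofFn_add]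

/-- An infinite word `u` over `Q ∪ Q⁻¹` is essentially trivial if and only if there
is an integer `m` such that the reduced form of every finite factor of `u` has
length at most `m`. -/
theorem essentiallyTrivial_iff_bounded_factor_reductions (u : ℕ → Q × Bool) :
    EssentiallyTrivial u ↔ ∃ m : ℕ, ∀ i l : ℕ, (red (factor u i l)).length ≤ m := by
  constructor
  · rintro ⟨m, hm⟩
    refine ⟨2 * m, fun i l => ?_⟩
    have key : FreeGroup.mk (factor u i l)
        = (FreeGroup.mk (pre u i))⁻¹ * FreeGroup.mk (pre u (i + l)) := by
      rw [pre_append, ← FreeGroup.mul_mk, inv_mul_cancel_left]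
    have h1 : red (factor u i l) = (FreeGroup.mk (factor u i l)).toWord := by
      rw [FreeGroup.toWord_mk]; rfl
    rw [h1, key]
    calc ((FreeGroup.mk (pre u i))⁻¹ * FreeGroup.mk (pre u (i + l))).toWord.length
        ≤ ((FreeGroup.mk (pre u i))⁻¹.toWord ++ (FreeGroup.mk (pre u (i + l))).toWord).length :=
          (FreeGroup.toWord_mul_sublist _ _).length_le
      _ = (FreeGroup.mk (pre u i))⁻¹.toWord.length
            + (FreeGroup.mk (pre u (i + l))).toWord.length := List.length_append
      _ ≤ 2 * m := by
          rw [FreeGroup.toWord_inv, FreeGroup.invRev_length, FreeGroup.toWord_mk,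
            FreeGroup.toWord_mk]
          have := hm i
          have := hm (i + l)
          simp only [red] at *
          omega
  · rintro ⟨m, hm⟩
    refine ⟨m, fun n => ?_⟩
    have : pre u n = factor u 0 n := by simp [pre, factor]
    rw [this]; exact hm 0 n
end

section
/- An element u of (Q ∪ Q^{-1})^ω is essentially trivial if and only if u is the label of a right-infinite path, starting from the root, in some finite rooted inverse tree over Q. -/
variable {Q : Type} [DecidableEq Q] [Fintype Q]

/-- A finite rooted inverse tree over `Q`: a finite deterministic involutive
`(Q ∪ Q⁻¹)`-labelled graph with a base point, without loops or parallel edges,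
whose underlying undirected graph (one edge from each inverse pair, orientation
forgotten) is a tree. -/
structure RootedInverseTree (Q : Type) [DecidableEq Q] where
  V : Type
  fin : Fintype V
  root : V
  edge : V → Q × Bool → Option V
  invol : ∀ v a w, edge v a = some w → edge w (a.1, !a.2) = some v
  noLoop : ∀ v a, edge v a ≠ some v
  noMulti : ∀ v a b w, edge v a = some w → edge v b = some w → a = b
  tree : (SimpleGraph.fromRel fun v w => ∃ a, edge v a = some w).IsTree

set_option linter.unusedSectionVars false

section Aux

namespace InvTreeAux

variable {α : Type} [DecidableEq α] [Fintype α]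

omit [DecidableEq α] [Fintype α] in
lemma red_eq_of_length_eq {L₁ L₂ : List (α × Bool)} (h : FreeGroup.Red L₁ L₂)
    (hl : L₁.length = L₂.length) : L₁ = L₂ := by
  rcases Relation.ReflTransGen.cases_head h with rfl | ⟨c, hstep, hred⟩
  · rfl
  · exfalso
    have h1 := (FreeGroup.Red.Step.length hstep)
    have h2 := (FreeGroup.Red.length_le hred)
    omega

omit [Fintype α] in
lemma reduced_of_no_cancel {L : List (α × Bool)}
    (h : ∀ (L₁ : List (α × Bool)) (x : α) (b : Bool) (L₂ : List (α × Bool)),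
      L ≠ L₁ ++ (x, b) :: (x, !b) :: L₂) : FreeGroup.reduce L = L := by
  rcases Relation.ReflTransGen.cases_head (FreeGroup.reduce.red (L := L)) with h' | ⟨c, hstep, _⟩
  · exact h'.symm
  · cases hstep with
    | not => exact absurd rfl (h _ _ _ _)

omit [Fintype α] in
lemma reduced_prefix {L₁ L₂ : List (α × Bool)} (h : FreeGroup.reduce (L₁ ++ L₂) = L₁ ++ L₂) :
    FreeGroup.reduce L₁ = L₁ := by
  apply reduced_of_no_cancel
  intro M₁ x b M₂ hL
  exact FreeGroup.reduce.not (L₁ := L₁ ++ L₂) (L₂ := M₁) (L₃ := M₂ ++ L₂) (x := x) (b := b)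
    (by rw [h, hL]; simp)

omit [DecidableEq α] [Fintype α] in
lemma mk_concat_cancel (L : List (α × Bool)) (a : α × Bool) :
    FreeGroup.mk (L ++ [a] ++ [(a.1, !a.2)]) = FreeGroup.mk L := by
  have : FreeGroup.mk (L ++ (a.1, a.2) :: (a.1, !a.2) :: ([] : List (α × Bool)))
      = FreeGroup.mk (L ++ []) := Quot.sound (FreeGroup.Red.Step.not)
  simpa using this

omit [Fintype α] in
lemma reduce_concat_cases {L : List (α × Bool)} (hL : FreeGroup.reduce L = L) (a : α × Bool) :
    FreeGroup.reduce (L ++ [a]) = L ++ [a] ∨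
      L = FreeGroup.reduce (L ++ [a]) ++ [(a.1, !a.2)] := by
  set w := FreeGroup.reduce (L ++ [a]) with hw
  have hred : FreeGroup.Red (L ++ [a]) w := FreeGroup.reduce.red
  obtain ⟨n, hn⟩ := (FreeGroup.Red.length hred)
  rcases Nat.eq_zero_or_pos n with rfl | hn0
  · left
    exact (red_eq_of_length_eq hred (by omega)).symm
  · right
    have hmkw : FreeGroup.mk w = FreeGroup.mk (L ++ [a]) := by
      rw [hw]; exact FreeGroup.reduce.self
    have hmk : FreeGroup.mk (w ++ [(a.1, !a.2)]) = FreeGroup.mk L := by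
      rw [← FreeGroup.mul_mk, hmkw, FreeGroup.mul_mk, List.append_assoc]
      simpa using mk_concat_cancel L a
    have hr : FreeGroup.reduce (w ++ [(a.1, !a.2)]) = L := by
      rw [FreeGroup.reduce.sound hmk, hL]
    have hred2 : FreeGroup.Red (w ++ [(a.1, !a.2)]) L := by
      rw [← hr]; exact FreeGroup.reduce.red
    have hlen : (w ++ [(a.1, !a.2)]).length = L.length := by
      have := (FreeGroup.Red.length_le hred2)
      simp only [List.length_append, List.length_cons, List.length_nil] at *
      omega
    exact (red_eq_of_length_eq hred2 hlen).symm

omit [Fintype α] in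
lemma reduce_concat_concat_inv {L : List (α × Bool)} (hL : FreeGroup.reduce L = L)
    (a : α × Bool) :
    FreeGroup.reduce (FreeGroup.reduce (L ++ [a]) ++ [(a.1, !a.2)]) = L := by
  have hmk : FreeGroup.mk (FreeGroup.reduce (L ++ [a]) ++ [(a.1, !a.2)]) = FreeGroup.mk L := by
    rw [← FreeGroup.mul_mk, FreeGroup.reduce.self, FreeGroup.mul_mk, List.append_assoc]
    simpa using mk_concat_cancel L a
  rw [FreeGroup.reduce.sound hmk, hL]

omit [Fintype α] in
lemma reduced_no_adjacent {L M₁ M₂ : List (α × Bool)} {a : α × Bool}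
    (hL : FreeGroup.reduce L = L) (hdec : L = M₁ ++ [a, (a.1, !a.2)] ++ M₂) : False := by
  apply FreeGroup.reduce.not (L₁ := L) (L₂ := M₁) (L₃ := M₂) (x := a.1) (b := a.2)
  rw [hL, hdec]; simp

/-! ### The ball of radius `m` in the free group, as an inverse tree -/

variable (α) in
/-- Reduced words of length at most `m`. -/
def BallV (m : ℕ) : Type := {w : List (α × Bool) // FreeGroup.reduce w = w ∧ w.length ≤ m}

variable {m : ℕ}

instance : DecidableEq (BallV α m) := fun v w =>
  decidable_of_iff (v.1 = w.1) Subtype.ext_iff.symm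

noncomputable instance : Fintype (BallV α m) := by
  classical
  exact Fintype.ofInjective (fun w : BallV α m => (fun i : Fin m => w.1[(i : ℕ)]?)) (by
    intro v w h
    apply Subtype.ext
    apply List.ext_getElem?
    intro i
    by_cases hi : i < m
    · exact congrFun h ⟨i, hi⟩
    · rw [List.getElem?_eq_none (le_trans v.2.2 (by omega)),
        List.getElem?_eq_none (le_trans w.2.2 (by omega))])

/-- The root: the empty word. -/
def ballRoot : BallV α m := ⟨[], by simp, by simp⟩

/-- The edge map of the ball. -/
noncomputable def ballEdge (v : BallV α m) (a : α × Bool) : Option (BallV α m) :=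
  if h : (FreeGroup.reduce (v.1 ++ [a])).length ≤ m then
    some ⟨FreeGroup.reduce (v.1 ++ [a]), FreeGroup.reduce.idem, h⟩ else none

lemma ballEdge_some_iff {v w : BallV α m} {a : α × Bool} :
    ballEdge v a = some w ↔ w.1 = FreeGroup.reduce (v.1 ++ [a]) := by
  constructor
  · intro h
    by_cases hl : (FreeGroup.reduce (v.1 ++ [a])).length ≤ m
    · rw [ballEdge, dif_pos hl] at h
      exact (congrArg Subtype.val (Option.some_injective _ h)).symm
    · rw [ballEdge, dif_neg hl] at h; cases h
  · intro h
    have hl : (FreeGroup.reduce (v.1 ++ [a])).length ≤ m := h ▸ w.2.2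
    rw [ballEdge, dif_pos hl]
    exact congrArg some (Subtype.ext h.symm)

lemma ballEdge_invol (v : BallV α m) (a : α × Bool) (w : BallV α m)
    (h : ballEdge v a = some w) : ballEdge w (a.1, !a.2) = some v := by
  rw [ballEdge_some_iff] at h ⊢
  rw [h]
  exact (reduce_concat_concat_inv v.2.1 a).symm

lemma ballEdge_noLoop (v : BallV α m) (a : α × Bool) : ballEdge v a ≠ some v := by
  intro h
  rw [ballEdge_some_iff] at h
  have hred : FreeGroup.Red (v.1 ++ [a]) v.1 := by
    conv_rhs => rw [h]
    exact FreeGroup.reduce.red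
  obtain ⟨n, hn⟩ := FreeGroup.Red.length hred
  simp only [List.length_append, List.length_cons, List.length_nil] at hn
  omega

lemma ballEdge_noMulti (v : BallV α m) (a b : α × Bool) (w : BallV α m)
    (ha : ballEdge v a = some w) (hb : ballEdge v b = some w) : a = b := by
  rw [ballEdge_some_iff] at ha hb
  have hmk : FreeGroup.mk (v.1 ++ [a]) = FreeGroup.mk (v.1 ++ [b]) :=
    FreeGroup.reduce.exact (by rw [← ha, ← hb])
  rw [← FreeGroup.mul_mk, ← FreeGroup.mul_mk] at hmk
  have h2 : FreeGroup.mk [a] = FreeGroup.mk [b] := mul_left_cancel hmk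
  have h3 := FreeGroup.reduce.sound h2
  rw [FreeGroup.reduce_singleton, FreeGroup.reduce_singleton] at h3
  exact List.head_eq_of_cons_eq h3

/-- The underlying simple graph of the ball. -/
noncomputable def ballGraph : SimpleGraph (BallV α m) :=
  SimpleGraph.fromRel fun v w => ∃ a, ballEdge v a = some w

lemma ballAdj_iff {v w : BallV α m} :
    (ballGraph (α := α) (m := m)).Adj v w ↔
      (∃ a, w.1 = v.1 ++ [a]) ∨ (∃ a, v.1 = w.1 ++ [a]) := by
  constructor
  · rintro ⟨hne, (⟨a, ha⟩ | ⟨a, ha⟩)⟩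
    · rw [ballEdge_some_iff] at ha
      rcases reduce_concat_cases v.2.1 a with h | h
      · exact Or.inl ⟨a, by rw [ha, h]⟩
      · exact Or.inr ⟨(a.1, !a.2), by rw [← ha] at h; exact h⟩
    · rw [ballEdge_some_iff] at ha
      rcases reduce_concat_cases w.2.1 a with h | h
      · exact Or.inr ⟨a, by rw [ha, h]⟩
      · exact Or.inl ⟨(a.1, !a.2), by rw [← ha] at h; exact h⟩
  · intro h
    have key : ∀ v w : BallV α m, (∃ a, w.1 = v.1 ++ [a]) →
        (ballGraph (α := α) (m := m)).Adj v w := by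
      rintro v w ⟨a, ha⟩
      have hne : v ≠ w := by
        intro h'
        have := congrArg (fun z : BallV α m => z.1.length) h'
        simp only [ha, List.length_append, List.length_cons, List.length_nil] at this
        omega
      refine ⟨hne, Or.inl ⟨a, ?_⟩⟩
      rw [ballEdge_some_iff, ← ha, w.2.1]
    rcases h with h | h
    · exact key v w h
    · exact (key w v h).symm

lemma ball_reachable : ∀ (n : ℕ) (v : BallV α m), v.1.length = n →
    (ballGraph (α := α) (m := m)).Reachable ballRoot v := by
  intro n
  induction n using Nat.strong_induction_on with
  | _ n ih =>
    intro v hv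
    rcases List.eq_nil_or_concat v.1 with h | ⟨L, a, h⟩
    all_goals try rw [List.concat_eq_append] at h
    · have : v = ballRoot := Subtype.ext h
      rw [this]
    · have hred : FreeGroup.reduce L = L := reduced_prefix (h ▸ v.2.1)
      have hlen : L.length ≤ m := by
        have := v.2.2
        rw [h] at this; simp at this; omega
      set par : BallV α m := ⟨L, hred, hlen⟩ with hpar
      have hadj : (ballGraph (α := α) (m := m)).Adj par v :=
        ballAdj_iff.mpr (Or.inl ⟨a, h⟩)
      have hlt : L.length < n := by
        have := congrArg List.length h
        simp only [List.length_append, List.length_cons, List.length_nil] at this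
        omega
      exact (ih L.length hlt par rfl).trans hadj.reachable

lemma ball_connected : (ballGraph (α := α) (m := m)).Connected := by
  have : Nonempty (BallV α m) := ⟨ballRoot⟩
  exact SimpleGraph.Connected.mk
    (fun v w => (ball_reachable v.1.length v rfl).symm.trans (ball_reachable w.1.length w rfl))

lemma ball_acyclic : (ballGraph (α := α) (m := m)).IsAcyclic := by
  classical
  intro v c hc
  have hne : c.support.toFinset.Nonempty := ⟨v, by simp⟩
  obtain ⟨u, hu, hmax⟩ := Finset.exists_max_image c.support.toFinset
    (fun z : BallV α m => z.1.length) hne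
  rw [List.mem_toFinset] at hu
  have hcyc : (c.rotate u hu).IsCycle := hc.rotate hu
  set c' := c.rotate u hu with hc'def
  have hsup : ∀ z ∈ c'.support, z.1.length ≤ u.1.length := by
    intro z hz
    apply hmax
    rw [List.mem_toFinset]
    rw [SimpleGraph.Walk.support_eq_cons c'] at hz
    rcases List.mem_cons.mp hz with rfl | hz'
    · exact hu
    · rw [hc'def] at hz'
      exact List.mem_of_mem_tail
        (((SimpleGraph.Walk.support_rotate c u hu).mem_iff).mp hz')
  have hnn : ¬ c'.Nil := hcyc.not_nil
  obtain ⟨x, hux, p, hp⟩ := SimpleGraph.Walk.not_nil_iff.mp hnn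
  have hlen3 := hcyc.three_le_length
  have hclen : c'.length = p.length + 1 := by rw [hp]; simp
  have hpnn : ¬ p.Nil := by
    rw [SimpleGraph.Walk.not_nil_iff_lt_length]; omega
  have hprnn : ¬ p.reverse.Nil := by
    rw [SimpleGraph.Walk.not_nil_iff_lt_length, SimpleGraph.Walk.length_reverse]
    rw [SimpleGraph.Walk.not_nil_iff_lt_length] at hpnn; omega
  obtain ⟨y, huy, q, hq⟩ := SimpleGraph.Walk.not_nil_iff.mp hprnn
  have hxs : x ∈ c'.support := by
    rw [hp, SimpleGraph.Walk.support_cons]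
    exact List.mem_cons_of_mem _ p.start_mem_support
  have hys : y ∈ c'.support := by
    have hy' : y ∈ p.reverse.support := by
      rw [hq, SimpleGraph.Walk.support_cons]
      exact List.mem_cons_of_mem _ q.start_mem_support
    rw [SimpleGraph.Walk.support_reverse, List.mem_reverse] at hy'
    rw [hp, SimpleGraph.Walk.support_cons]
    exact List.mem_cons_of_mem _ hy'
  have key : ∀ z : BallV α m, (ballGraph (α := α) (m := m)).Adj u z →
      z.1.length ≤ u.1.length → z.1 = u.1.dropLast := by
    intro z hadj hz
    rcases ballAdj_iff.mp hadj with ⟨a, ha⟩ | ⟨a, ha⟩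
    · exfalso
      have := congrArg List.length ha
      simp only [List.length_append, List.length_cons, List.length_nil] at this
      omega
    · rw [ha, List.dropLast_concat]
  have hxy : x = y := Subtype.ext (by rw [key x hux (hsup x hxs), key y huy (hsup y hys)])
  have hedges : c'.edges = s(u, x) :: p.edges := by rw [hp, SimpleGraph.Walk.edges_cons]
  have hyq : s(u, y) ∈ p.edges := by
    have h1 : s(u, y) ∈ p.reverse.edges := by
      rw [hq, SimpleGraph.Walk.edges_cons]
      exact List.mem_cons_self
    rwa [SimpleGraph.Walk.edges_reverse, List.mem_reverse] at h1
  have hnodup : (s(u, x) :: p.edges).Nodup := hedges ▸ hcyc.isTrail.edges_nodup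
  rw [← hxy] at hyq
  exact (List.nodup_cons.mp hnodup).1 hyq

lemma ball_isTree : (ballGraph (α := α) (m := m)).IsTree :=
  ⟨ball_connected, ball_acyclic⟩

/-! ### Reading words in an inverse graph -/

section Read

variable {V : Type}

/-- The graph underlying an edge-labelled graph. -/
def igGraph (edge : V → α × Bool → Option V) : SimpleGraph V :=
  SimpleGraph.fromRel fun v w => ∃ a, edge v a = some w

variable (edge : V → α × Bool → Option V)

/-- Reading a word from a vertex. -/
def evalW : V → List (α × Bool) → Option V
  | v, [] => some v
  | v, a :: l => (edge v a).bind (fun w => evalW w l)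

lemma evalW_append (v : V) (l₁ l₂ : List (α × Bool)) :
    evalW edge v (l₁ ++ l₂) = (evalW edge v l₁).bind (fun w => evalW edge w l₂) := by
  induction l₁ generalizing v with
  | nil => rfl
  | cons a l ih =>
    simp only [List.cons_append, evalW]
    cases edge v a with
    | none => rfl
    | some w => simp [ih]

lemma evalW_singleton (v : V) (a : α × Bool) : evalW edge v [a] = edge v a := by
  cases h : edge v a <;> simp [evalW, h]

variable (hinvol : ∀ v a w, edge v a = some w → edge w (a.1, !a.2) = some v)

include hinvol in
lemma evalW_step {l₁ l₂ : List (α × Bool)} (h : FreeGroup.Red.Step l₁ l₂)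
    (v x : V) (hx : evalW edge v l₁ = some x) : evalW edge v l₂ = some x := by
  cases h with
  | @not L₁ L₂ y b =>
    rw [evalW_append] at hx ⊢
    cases h1 : evalW edge v L₁ with
    | none => rw [h1] at hx; simp at hx
    | some p =>
      rw [h1] at hx
      simp only [Option.bind_some] at hx ⊢
      simp only [evalW] at hx
      cases h2 : edge p (y, b) with
      | none => rw [h2] at hx; simp at hx
      | some r =>
        rw [h2] at hx
        have h3 := hinvol p (y, b) r h2
        simp only [Option.bind_some] at hx
        rw [h3] at hx
        simpa using hx

include hinvol in
lemma evalW_red {l₁ l₂ : List (α × Bool)} (h : FreeGroup.Red l₁ l₂)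
    (v x : V) (hx : evalW edge v l₁ = some x) : evalW edge v l₂ = some x := by
  induction h with
  | refl => exact hx
  | tail _ hstep ih => exact evalW_step edge hinvol hstep _ _ ih

omit [DecidableEq α] [Fintype α] in
lemma walk_support_getLast? {G : SimpleGraph V} {a b : V} (p : G.Walk a b) :
    p.support.getLast? = some b := by
  rw [← List.head?_reverse, ← SimpleGraph.Walk.support_reverse,
    SimpleGraph.Walk.support_eq_cons]
  rfl

omit [DecidableEq α] [Fintype α] in
lemma isPath_concat {G : SimpleGraph V} {a b c : V} (p : G.Walk a b) (h : G.Adj b c)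
    (hp : p.IsPath) (hc : c ∉ p.support) : (p.concat h).IsPath := by
  rw [SimpleGraph.Walk.isPath_def, SimpleGraph.Walk.support_concat,
    List.nodup_append]
  exact ⟨hp.support_nodup, List.nodup_singleton c, by simpa using fun a ha (hac : a = c) => hc (hac ▸ ha)⟩

variable (root : V)

include hinvol in
lemma evalW_isPath
    (hnoLoop : ∀ v a, edge v a ≠ some v)
    (hnoMulti : ∀ v a b w, edge v a = some w → edge v b = some w → a = b)
    (htree : (igGraph edge).IsTree) :
    ∀ (w : List (α × Bool)), FreeGroup.reduce w = w → ∀ x, evalW edge root w = some x →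
    ∃ p : (igGraph edge).Walk root x, p.IsPath ∧ p.length = w.length ∧
      (∀ (z : V), evalW edge root w.dropLast = some z → w ≠ [] →
        ∃ (q : (igGraph edge).Walk root z) (h : (igGraph edge).Adj z x),
          p = q.concat h) := by
  intro w
  induction w using List.reverseRecOn with
  | nil =>
    intro _ x hx
    obtain rfl : root = x := by simpa [evalW] using hx
    exact ⟨SimpleGraph.Walk.nil, SimpleGraph.Walk.IsPath.nil, rfl,
      fun z _ hne => absurd rfl hne⟩
  | append_singleton w' a ih =>
    intro hred x hx
    have hred' : FreeGroup.reduce w' = w' := reduced_prefix hred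
    rw [evalW_append] at hx
    cases hy : evalW edge root w' with
    | none => rw [hy] at hx; simp at hx
    | some y =>
    rw [hy] at hx
    simp only [Option.bind_some, evalW_singleton] at hx
    have hedge : edge y a = some x := hx
    obtain ⟨p', hp'path, hp'len, hp'dec⟩ := ih hred' y hy
    have hxy : x ≠ y := fun h => hnoLoop y a (h ▸ hedge)
    have hadj : (igGraph edge).Adj y x := ⟨hxy.symm, Or.inl ⟨a, hedge⟩⟩
    have hxsup : x ∉ p'.support := by
      intro hxs
      rcases List.eq_nil_or_concat w' with rfl | ⟨w'', b, hw'⟩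
      · have hry : root = y := by simpa [evalW] using hy
        subst hry
        rw [(SimpleGraph.Walk.isPath_iff_eq_nil (p := p')).mp hp'path] at hxs
        exact hxy (by simpa using hxs)
      · rw [List.concat_eq_append] at hw'
        subst hw'
        have hz' : ∃ z', evalW edge root w'' = some z' ∧ edge z' b = some y := by
          rw [evalW_append] at hy
          cases hz : evalW edge root w'' with
          | none => rw [hz] at hy; simp at hy
          | some z' =>
            rw [hz] at hy
            simp only [Option.bind_some, evalW_singleton] at hy
            exact ⟨z', rfl, hy⟩
        obtain ⟨z', hz'eval, hz'edge⟩ := hz'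
        obtain ⟨q', hadj', hp'eq⟩ := hp'dec z' (by simpa using hz'eval) (by simp)
        haveI : DecidableEq V := Classical.decEq V
        set t := p'.takeUntil x hxs with ht
        have htpath : t.IsPath := hp'path.takeUntil hxs
        have hynott : y ∉ t.support := by
          intro hyt
          have hyd : y ∈ (p'.dropUntil x hxs).support.tail := by
            have h5 : y ∈ (p'.dropUntil x hxs).support :=
              SimpleGraph.Walk.end_mem_support _
            rw [SimpleGraph.Walk.support_eq_cons] at h5
            rcases List.mem_cons.mp h5 with h6 | h6
            · exact absurd h6.symm hxy
            · exact h6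
          have hnodup := hp'path.support_nodup
          rw [← p'.take_spec hxs, SimpleGraph.Walk.support_append] at hnodup
          exact (List.disjoint_of_nodup_append hnodup) hyt hyd
        have hQ1path : (t.concat hadj.symm).IsPath := isPath_concat t hadj.symm htpath hynott
        have hQeq : t.concat hadj.symm = p' :=
          (htree.existsUnique_path root y).unique hQ1path hp'path
        have h1 : (t.concat hadj.symm).support.dropLast.getLast? = some x := by
          rw [SimpleGraph.Walk.support_concat, List.dropLast_concat]
          exact walk_support_getLast? t
        have h2 : p'.support.dropLast.getLast? = some z' := by
          rw [hp'eq, SimpleGraph.Walk.support_concat,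
            List.dropLast_concat]
          exact walk_support_getLast? q'
        rw [hQeq, h2] at h1
        have hxz : z' = x := by injection h1
        subst hxz
        have hb' : edge y (b.1, !b.2) = some z' := hinvol z' b y hz'edge
        have hab : a = (b.1, !b.2) := hnoMulti y a (b.1, !b.2) z' hedge hb'
        exact reduced_no_adjacent (a := b) (M₁ := w'') (M₂ := []) hred (by rw [hab]; simp)
    refine ⟨p'.concat hadj, isPath_concat p' hadj hp'path hxsup, by simp [hp'len], ?_⟩
    intro z hzeval _
    rw [List.dropLast_concat, hy] at hzeval
    obtain rfl : y = z := by injection hzeval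
    exact ⟨p', hadj, rfl⟩

end Read

end InvTreeAux

end Aux

lemma pre_succ (u : ℕ → Q × Bool) (n : ℕ) : pre u (n + 1) = pre u n ++ [u n] := by
  rw [pre, pre, List.ofFn_succ', List.concat_eq_append]
  simp

/-- An infinite word `u` over `Q ∪ Q⁻¹` is essentially trivial if and only if `u`
is the label of a right-infinite path starting from the root in some finite rooted
inverse tree over `Q`. -/
theorem essentiallyTrivial_iff_path_in_finite_inverse_tree (u : ℕ → Q × Bool) :
    EssentiallyTrivial u ↔
      ∃ (T : RootedInverseTree Q) (f : ℕ → T.V),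
        f 0 = T.root ∧ ∀ n, T.edge (f n) (u n) = some (f (n + 1)) := by
  constructor
  · rintro ⟨m, hm⟩
    refine ⟨⟨InvTreeAux.BallV Q m, inferInstance, InvTreeAux.ballRoot, InvTreeAux.ballEdge,
      InvTreeAux.ballEdge_invol, InvTreeAux.ballEdge_noLoop, InvTreeAux.ballEdge_noMulti,
      InvTreeAux.ball_isTree⟩,
      fun n => ⟨FreeGroup.reduce (pre u n), FreeGroup.reduce.idem, hm n⟩, ?_, ?_⟩
    · apply Subtype.ext
      simp [pre, InvTreeAux.ballRoot]
    · intro n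
      refine InvTreeAux.ballEdge_some_iff.mpr ?_
      refine FreeGroup.reduce.sound ?_
      rw [pre_succ, ← FreeGroup.mul_mk, ← FreeGroup.mul_mk, FreeGroup.reduce.self]
  · rintro ⟨T, f, h0, hstep⟩
    haveI := T.fin
    refine ⟨Fintype.card T.V, fun n => ?_⟩
    have heval : ∀ k, InvTreeAux.evalW T.edge T.root (pre u k) = some (f k) := by
      intro k
      induction k with
      | zero => rw [← h0]; simp [pre, InvTreeAux.evalW]
      | succ k ih =>
        rw [pre_succ, InvTreeAux.evalW_append, ih]
        simp only [Option.bind_some, InvTreeAux.evalW_singleton]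
        exact hstep k
    have hredeval : InvTreeAux.evalW T.edge T.root (red (pre u n)) = some (f n) :=
      InvTreeAux.evalW_red T.edge T.invol FreeGroup.reduce.red T.root (f n) (heval n)
    obtain ⟨p, hp, hlen, -⟩ := InvTreeAux.evalW_isPath T.edge T.invol T.root T.noLoop
      T.noMulti T.tree (red (pre u n)) (by simp only [red]; exact FreeGroup.reduce.idem)
      (f n) hredeval
    rw [← hlen]
    exact le_of_lt hp.length_lt
end
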